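/- arXiv:2206.05685 — 2 statements merged into one kernel-verified Lean document; each statement's English description precedes it below -/
import Mathlib

section
/- Let d > 0, let V_int : ℝ → ℝ, and let u₁, u₂ : ℝ² × ℝ → ℂ be 𝕃-periodic in their first variable satisfying u_j(R_{2π/3}⁻¹ x, z) = ω^j e^{i(K − R_{2π/3}K)·x} u_j(x, z) for j = 1, 2 and all (x,z) (ω := e^{2πi/3}), and u₂(x, z) = conj(u₁(−x, z)) for all (x,z), with enough integrability for the integrals below to converge absolutely. Define the 2×2 matrix W with entries W_{jj'} := ∫_{Ω×ℝ} conj(u_j(x, z − d/2)) u_{j'}(x, z − d/2) V_int(z) dx dz. Then W is proportional to the identity: W_{12} = W_{21} = 0 and W_{11} = W_{22} ∈ ℝ. -/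
noncomputable section

open MeasureTheory Real Complex

abbrev Pt : Type := ℝ × ℝ

/-- Euclidean dot product on ℝ². -/
def dot (v w : Pt) : ℝ := v.1 * w.1 + v.2 * w.2

/-- The matrix J acting by J(x₁,x₂) = (x₂, −x₁). -/
def Jmat (v : Pt) : Pt := (v.2, -v.1)

/-- Rotation of ℝ² by angle θ. -/
def rotA (θ : ℝ) (v : Pt) : Pt :=
  (Real.cos θ * v.1 - Real.sin θ * v.2, Real.sin θ * v.1 + Real.cos θ * v.2)

/-- Lattice vector a₁ = a₀(1/2, −√3/2). -/
def av1 (a0 : ℝ) : Pt := (a0 / 2, -(Real.sqrt 3 * a0 / 2))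

/-- Lattice vector a₂ = a₀(1/2, √3/2). -/
def av2 (a0 : ℝ) : Pt := (a0 / 2, Real.sqrt 3 * a0 / 2)

/-- The graphene lattice 𝕃 = ℤa₁ + ℤa₂. -/
def lat (a0 : ℝ) : AddSubgroup Pt := AddSubgroup.closure {av1 a0, av2 a0}

/-- The moiré lattice 𝕃_M = J𝕃. -/
def latM (a0 : ℝ) : AddSubgroup Pt := AddSubgroup.closure {Jmat (av1 a0), Jmat (av2 a0)}

/-- Dual basis vector a₁*. -/
def as1 (a0 : ℝ) : Pt := (2 * π / a0, -(2 * π / (Real.sqrt 3 * a0)))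

/-- Dual basis vector a₂*. -/
def as2 (a0 : ℝ) : Pt := (2 * π / a0, 2 * π / (Real.sqrt 3 * a0))

/-- The Dirac point K = (a₁* + a₂*)/3. -/
def Kpt (a0 : ℝ) : Pt := (3 : ℝ)⁻¹ • (as1 a0 + as2 a0)

/-- A dual lattice vector G = m₁a₁* + m₂a₂*. -/
def dualVec (a0 : ℝ) (m : ℤ × ℤ) : Pt := (m.1 : ℝ) • as1 a0 + (m.2 : ℝ) • as2 a0

/-- 𝕃-periodicity in the first variable. -/
def LPeriodic (a0 : ℝ) (f : Pt → ℝ → ℂ) : Prop :=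
  ∀ R ∈ lat a0, ∀ (x : Pt) (z : ℝ), f (x + R) z = f x z

/-- K-quasiperiodicity in the first variable. -/
def KQuasiperiodic (a0 : ℝ) (Φ : Pt → ℝ → ℂ) : Prop :=
  ∀ R ∈ lat a0, ∀ (x : Pt) (z : ℝ),
    Φ (x + R) z = Complex.exp (Complex.I * (dot (Kpt a0) R : ℂ)) * Φ x z

/-- ω = e^{2πi/3}. -/
def ωc : ℂ := Complex.exp (2 * Real.pi * Complex.I / 3)

/-- The integrand of ((f,g))_d^{ηη'}(X). -/
def braFn (d η η' : ℝ) (f g : Pt → ℝ → ℂ) (X : Pt) (p : Pt × ℝ) : ℂ :=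
  (starRingEnd ℂ) (f (p.1 - (η / 2) • Jmat X) (p.2 - η * d / 2)) *
    g (p.1 - (η' / 2) • Jmat X) (p.2 - η' * d / 2)

/-- ((f,g))_d^{ηη'}(X), the interlayer pairing. -/
def bra (d : ℝ) (Ω : Set Pt) (η η' : ℝ) (f g : Pt → ℝ → ℂ) (X : Pt) : ℂ :=
  ∫ p in Ω ×ˢ (Set.univ : Set ℝ), braFn d η η' f g X p


-- ### Auxiliary lemmas ###

lemma rotA_comp (θ₁ θ₂ : ℝ) (v : Pt) : rotA θ₁ (rotA θ₂ v) = rotA (θ₁ + θ₂) v := by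
  simp only [rotA, Real.cos_add, Real.sin_add, Prod.mk.injEq]
  constructor <;> ring

lemma rotA_zero (v : Pt) : rotA 0 v = v := by simp [rotA]

lemma rotA_left_inv (θ : ℝ) (v : Pt) : rotA (-θ) (rotA θ v) = v := by
  rw [rotA_comp, neg_add_cancel, rotA_zero]

lemma rotA_right_inv (θ : ℝ) (v : Pt) : rotA θ (rotA (-θ) v) = v := by
  rw [rotA_comp, add_neg_cancel, rotA_zero]

lemma rotA_add (θ : ℝ) (a b : Pt) : rotA θ (a + b) = rotA θ a + rotA θ b := by
  simp only [rotA, Prod.fst_add, Prod.snd_add, Prod.mk_add_mk, Prod.mk.injEq]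
  constructor <;> ring

def rotL (θ : ℝ) : Pt →ₗ[ℝ] Pt :=
  Matrix.toLin (Module.Basis.finTwoProd ℝ) (Module.Basis.finTwoProd ℝ)
    !![Real.cos θ, -Real.sin θ; Real.sin θ, Real.cos θ]

lemma rotL_apply (θ : ℝ) (v : Pt) : rotL θ v = rotA θ v := by
  simp only [rotL, Matrix.toLin_finTwoProd_apply, rotA, Prod.mk.injEq]
  exact ⟨by ring, trivial⟩

lemma rotL_coe (θ : ℝ) : ⇑(rotL θ) = rotA θ := funext (rotL_apply θ)

lemma rotL_det (θ : ℝ) : LinearMap.det (rotL θ) = 1 := by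
  have h := LinearMap.det_toMatrix (Module.Basis.finTwoProd ℝ) (rotL θ)
  rw [rotL, LinearMap.toMatrix_toLin] at h
  rw [rotL, ← h, Matrix.det_fin_two_of]
  nlinarith [Real.sin_sq_add_cos_sq θ]

lemma rotA_continuous (θ : ℝ) : Continuous (rotA θ) := by
  rw [← rotL_coe]; exact (rotL θ).continuous_of_finiteDimensional

lemma rotA_measurePreserving (θ : ℝ) :
    MeasurePreserving (rotA θ) (volume : Measure Pt) volume := by
  refine ⟨(rotA_continuous θ).measurable, ?_⟩
  rw [← rotL_coe,
    Measure.map_linearMap_addHaar_eq_smul_addHaar _ (by rw [rotL_det]; norm_num), rotL_det]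
  simp

def rotM (θ : ℝ) : Pt ≃ᵐ Pt where
  toFun := rotA θ
  invFun := rotA (-θ)
  left_inv := rotA_left_inv θ
  right_inv := rotA_right_inv θ
  measurable_toFun := (rotA_measurePreserving θ).measurable
  measurable_invFun := (rotA_measurePreserving (-θ)).measurable

lemma rotA_measurableEmbedding (θ : ℝ) : MeasurableEmbedding (rotA θ) :=
  (rotM θ).measurableEmbedding

lemma sqrt3_sq : Real.sqrt 3 * Real.sqrt 3 = 3 := Real.mul_self_sqrt (by norm_num)

lemma cos_2pi3 : Real.cos (2 * π / 3) = -(1/2) := by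
  rw [show (2 * π / 3 : ℝ) = π - π/3 by ring, Real.cos_pi_sub, Real.cos_pi_div_three]

lemma sin_2pi3 : Real.sin (2 * π / 3) = Real.sqrt 3 / 2 := by
  rw [show (2 * π / 3 : ℝ) = π - π/3 by ring, Real.sin_pi_sub, Real.sin_pi_div_three]

lemma rot_av1 (a0 : ℝ) : rotA (2 * π / 3) (av1 a0) = av2 a0 := by
  simp only [rotA, av1, av2, cos_2pi3, sin_2pi3, Prod.mk.injEq]
  exact ⟨by linear_combination (a0 / 4) * sqrt3_sq, by ring⟩

lemma rot_av2 (a0 : ℝ) : rotA (2 * π / 3) (av2 a0) = -(av1 a0 + av2 a0) := by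
  simp only [rotA, av1, av2, cos_2pi3, sin_2pi3, Prod.mk_add_mk, Prod.neg_mk, Prod.mk.injEq]
  exact ⟨by linear_combination (-(a0 / 4)) * sqrt3_sq, by ring⟩

lemma rotneg_av1 (a0 : ℝ) : rotA (-(2 * π / 3)) (av1 a0) = -(av1 a0 + av2 a0) := by
  simp only [rotA, av1, av2, Real.cos_neg, Real.sin_neg, cos_2pi3, sin_2pi3,
    Prod.mk_add_mk, Prod.neg_mk, Prod.mk.injEq]
  exact ⟨by linear_combination (-(a0 / 4)) * sqrt3_sq, by ring⟩

lemma rotneg_av2 (a0 : ℝ) : rotA (-(2 * π / 3)) (av2 a0) = av1 a0 := by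
  simp only [rotA, av1, av2, Real.cos_neg, Real.sin_neg, cos_2pi3, sin_2pi3, Prod.mk.injEq]
  exact ⟨by linear_combination (a0 / 4) * sqrt3_sq, by ring⟩

lemma rotA_pi (v : Pt) : rotA π v = -v := by
  simp [rotA, Prod.ext_iff]

lemma av1_mem (a0 : ℝ) : av1 a0 ∈ lat a0 :=
  AddSubgroup.subset_closure (Set.mem_insert _ _)
lemma av2_mem (a0 : ℝ) : av2 a0 ∈ lat a0 :=
  AddSubgroup.subset_closure (Set.mem_insert_of_mem _ rfl)

lemma lat_map_mem {a0 : ℝ} {f : Pt → Pt} (hadd : ∀ a b, f (a + b) = f a + f b)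
    (h1 : f (av1 a0) ∈ lat a0) (h2 : f (av2 a0) ∈ lat a0) :
    ∀ v ∈ lat a0, f v ∈ lat a0 := by
  intro v hv
  have hle : (lat a0).map (AddMonoidHom.mk' f hadd) ≤ lat a0 := by
    rw [lat, AddMonoidHom.map_closure]
    refine (AddSubgroup.closure_le _).2 ?_
    rintro x ⟨y, hy, rfl⟩
    rcases hy with rfl | hy
    · exact h1
    · rw [Set.mem_singleton_iff] at hy; subst hy; exact h2
  exact hle ⟨v, hv, rfl⟩

lemma rot_lat (a0 : ℝ) : ∀ v ∈ lat a0, rotA (2 * π / 3) v ∈ lat a0 :=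
  lat_map_mem (rotA_add _) (by rw [rot_av1]; exact av2_mem a0)
    (by rw [rot_av2]; exact neg_mem (add_mem (av1_mem a0) (av2_mem a0)))

lemma rotneg_lat (a0 : ℝ) : ∀ v ∈ lat a0, rotA (-(2 * π / 3)) v ∈ lat a0 :=
  lat_map_mem (rotA_add _) (by rw [rotneg_av1]; exact neg_mem (add_mem (av1_mem a0) (av2_mem a0)))
    (by rw [rotneg_av2]; exact av1_mem a0)

lemma rotpi_lat (a0 : ℝ) : ∀ v ∈ lat a0, rotA π v ∈ lat a0 :=
  lat_map_mem (rotA_add _) (by rw [rotA_pi]; exact neg_mem (av1_mem a0))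
    (by rw [rotA_pi]; exact neg_mem (av2_mem a0))

lemma lat_countable (a0 : ℝ) : Countable (lat a0) := by
  let S : AddSubgroup Pt :=
    { carrier := Set.range (fun mn : ℤ × ℤ => mn.1 • av1 a0 + mn.2 • av2 a0)
      zero_mem' := ⟨(0, 0), by simp⟩
      add_mem' := by
        rintro _ _ ⟨m, rfl⟩ ⟨n, rfl⟩
        exact ⟨(m.1 + n.1, m.2 + n.2), by simp only [add_zsmul]; abel⟩
      neg_mem' := by
        rintro _ ⟨m, rfl⟩
        exact ⟨(-m.1, -m.2), by simp only [neg_zsmul]; abel⟩ }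
  have hle : lat a0 ≤ S := by
    refine (AddSubgroup.closure_le _).2 ?_
    rintro x (rfl | hx)
    · exact ⟨(1, 0), by simp⟩
    · rw [Set.mem_singleton_iff] at hx; subst hx; exact ⟨(0, 1), by simp⟩
  exact ((Set.countable_range _).mono hle).to_subtype

lemma fd_preimage (a0 : ℝ) {Ω : Set Pt} (hΩ : IsAddFundamentalDomain (lat a0) Ω volume)
    (f g : Pt → Pt) (hfg : ∀ v, f (g v) = v) (hgf : ∀ v, g (f v) = v)
    (hfadd : ∀ a b, f (a + b) = f a + f b)
    (hf : MeasurePreserving f (volume : Measure Pt) volume)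
    (hflat : ∀ v ∈ lat a0, f v ∈ lat a0) (hglat : ∀ v ∈ lat a0, g v ∈ lat a0) :
    IsAddFundamentalDomain (lat a0) (f ⁻¹' Ω) volume := by
  refine hΩ.preimage_of_equiv (f := f) hf.quasiMeasurePreserving
    (e := fun γ => (⟨g ↑γ, hglat _ γ.2⟩ : lat a0)) ⟨?_, ?_⟩ ?_
  · intro x y hxy
    apply Subtype.ext
    have h1 : g (x : Pt) = g (y : Pt) := congrArg Subtype.val hxy
    have h2 := congrArg f h1
    rwa [hfg, hfg] at h2
  · intro γ
    exact ⟨⟨f ↑γ, hflat _ γ.2⟩, Subtype.ext (hgf _)⟩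
  · intro γ x
    show f ((g ↑γ) + x) = ↑γ + f x
    rw [hfadd, hfg]

lemma fd_integral (a0 : ℝ) {Ω Ω' : Set Pt} [Countable (lat a0)]
    (hΩ : IsAddFundamentalDomain (lat a0) Ω volume)
    (hΩ' : IsAddFundamentalDomain (lat a0) Ω' volume)
    (G : Pt × ℝ → ℂ)
    (hper : ∀ R ∈ lat a0, ∀ (x : Pt) (z : ℝ), G (x + R, z) = G (x, z))
    (h1 : IntegrableOn G (Ω ×ˢ (Set.univ : Set ℝ)) volume)
    (h2 : IntegrableOn G (Ω' ×ˢ (Set.univ : Set ℝ)) volume) :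
    ∫ p in Ω' ×ˢ (Set.univ : Set ℝ), G p = ∫ p in Ω ×ˢ (Set.univ : Set ℝ), G p := by
  rw [Measure.volume_eq_prod] at h1 h2 ⊢
  rw [setIntegral_prod _ h1, setIntegral_prod _ h2]
  refine hΩ'.setIntegral_eq hΩ (f := fun x => ∫ z in (Set.univ : Set ℝ), G (x, z)) ?_
  intro γ x
  show (∫ z in (Set.univ : Set ℝ), G ((γ : Pt) + x, z)) = ∫ z in (Set.univ : Set ℝ), G (x, z)
  have hz : ∀ z : ℝ, G ((γ : Pt) + x, z) = G (x, z) := fun z => by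
    rw [add_comm]; exact hper _ γ.2 x z
  simp only [hz]

lemma prod_map_pre (e : Pt → Pt) (s : Set Pt) :
    Prod.map e (id : ℝ → ℝ) ⁻¹' (s ×ˢ (Set.univ : Set ℝ)) = (e ⁻¹' s) ×ˢ Set.univ := by
  ext p; simp [Prod.map]

lemma cov_integral (e : Pt → Pt) (he : MeasurePreserving e (volume : Measure Pt) volume)
    (hemb : MeasurableEmbedding e) (s : Set Pt) (F : Pt × ℝ → ℂ) :
    ∫ p in (e ⁻¹' s) ×ˢ (Set.univ : Set ℝ), F (e p.1, p.2)
      = ∫ p in s ×ˢ (Set.univ : Set ℝ), F p := by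
  have hT : MeasurePreserving (Prod.map e (id : ℝ → ℝ)) (volume : Measure (Pt × ℝ)) volume := by
    have h := he.prod (MeasurePreserving.id (volume : Measure ℝ))
    rwa [← Measure.volume_eq_prod] at h
  have hTemb : MeasurableEmbedding (Prod.map e (id : ℝ → ℝ)) :=
    hemb.prodMap MeasurableEmbedding.id
  have h := hT.setIntegral_preimage_emb hTemb F (s ×ˢ Set.univ)
  rw [prod_map_pre] at h
  simpa [Prod.map] using h

lemma cov_integrableOn (e : Pt → Pt) (he : MeasurePreserving e (volume : Measure Pt) volume)
    (hemb : MeasurableEmbedding e) (s : Set Pt) (F : Pt × ℝ → ℂ) :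
    IntegrableOn (fun p : Pt × ℝ => F (e p.1, p.2)) ((e ⁻¹' s) ×ˢ (Set.univ : Set ℝ)) volume
      ↔ IntegrableOn F (s ×ˢ (Set.univ : Set ℝ)) volume := by
  have hT : MeasurePreserving (Prod.map e (id : ℝ → ℝ)) (volume : Measure (Pt × ℝ)) volume := by
    have h := he.prod (MeasurePreserving.id (volume : Measure ℝ))
    rwa [← Measure.volume_eq_prod] at h
  have hTemb : MeasurableEmbedding (Prod.map e (id : ℝ → ℝ)) :=
    hemb.prodMap MeasurableEmbedding.id
  have h := hT.integrableOn_comp_preimage hTemb (f := F) (s := s ×ˢ Set.univ)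
  rw [prod_map_pre] at h
  simpa [Function.comp_def, Prod.map] using h

lemma ωc_ne_zero : ωc ≠ 0 := Complex.exp_ne_zero _

lemma ωc_ne_one : ωc ≠ 1 := by
  rw [ωc]
  intro h
  rw [Complex.exp_eq_one_iff] at h
  obtain ⟨n, hn⟩ := h
  have hπ : (Real.pi : ℂ) ≠ 0 := Complex.ofReal_ne_zero.2 Real.pi_ne_zero
  have h3 : (2 * (Real.pi : ℂ) * Complex.I) ≠ 0 :=
    mul_ne_zero (mul_ne_zero two_ne_zero hπ) Complex.I_ne_zero
  have hn' : (2 * (Real.pi : ℂ) * Complex.I) * (1/3) = (2 * (Real.pi : ℂ) * Complex.I) * n := by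
    linear_combination hn
  have hc := mul_left_cancel₀ h3 hn'
  have hz : (1 : ℤ) = 3 * n := by
    exact_mod_cast (by linear_combination 3 * hc : (1 : ℂ) = 3 * n)
  omega

lemma conj_exp_eq (r : ℝ) :
    (starRingEnd ℂ) (Complex.exp (Complex.I * r)) * Complex.exp (Complex.I * r) = 1 := by
  rw [← Complex.exp_conj, ← Complex.exp_add, map_mul, Complex.conj_I, Complex.conj_ofReal,
    show -Complex.I * r + Complex.I * r = 0 by ring, Complex.exp_zero]

lemma conj_ωc_mul_sq : (starRingEnd ℂ) ωc * (ωc * ωc) = ωc := by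
  rw [ωc, ← Complex.exp_conj, ← Complex.exp_add, ← Complex.exp_add]
  congr 1
  rw [map_div₀, map_mul, map_mul, Complex.conj_I, Complex.conj_ofReal, map_ofNat, map_ofNat]
  ring

/-- The matrix-entry integrand. -/
def Fm (d : ℝ) (Vint : ℝ → ℝ) (u : ℤ → Pt → ℝ → ℂ) (j j' : ℤ) : Pt × ℝ → ℂ := fun p =>
  (starRingEnd ℂ) (u j p.1 (p.2 - d / 2)) * u j' p.1 (p.2 - d / 2) * ((Vint p.2 : ℝ) : ℂ)

/-- the interlayer correction matrix
W_{jj'} := ∫_{Ω×ℝ} conj(u_j(x,z−d/2)) u_{j'}(x,z−d/2) V_int(z) dx dz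
is a real multiple of the identity. -/
theorem stmt18 (a0 d : ℝ) (ha0 : 0 < a0) (hd : 0 < d) (Ω : Set Pt)
    (hΩ : IsAddFundamentalDomain (lat a0) Ω volume)
    (Vint : ℝ → ℝ) (u : ℤ → Pt → ℝ → ℂ)
    (huper : ∀ j ∈ ({1, 2} : Set ℤ), LPeriodic a0 (u j))
    (hurot : ∀ j ∈ ({1, 2} : Set ℤ), ∀ (x : Pt) (z : ℝ),
      u j (rotA (-(2 * π / 3)) x) z =
        ωc ^ j * Complex.exp (Complex.I *
          (dot (Kpt a0 - rotA (2 * π / 3) (Kpt a0)) x : ℂ)) * u j x z)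
    (hu21 : ∀ (x : Pt) (z : ℝ), u 2 x z = (starRingEnd ℂ) (u 1 (-x) z))
    (hint : ∀ j ∈ ({1, 2} : Set ℤ), ∀ j' ∈ ({1, 2} : Set ℤ),
      IntegrableOn
        (fun p : Pt × ℝ =>
          (starRingEnd ℂ) (u j p.1 (p.2 - d / 2)) * u j' p.1 (p.2 - d / 2) *
            ((Vint p.2 : ℝ) : ℂ))
        (Ω ×ˢ (Set.univ : Set ℝ)) volume)
    (Wm : ℤ → ℤ → ℂ)
    (hWm : ∀ j j' : ℤ, Wm j j' =
      ∫ p in Ω ×ˢ (Set.univ : Set ℝ),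
        (starRingEnd ℂ) (u j p.1 (p.2 - d / 2)) * u j' p.1 (p.2 - d / 2) *
          ((Vint p.2 : ℝ) : ℂ)) :
    Wm 1 2 = 0 ∧ Wm 2 1 = 0 ∧ Wm 1 1 = Wm 2 2 ∧ (starRingEnd ℂ) (Wm 1 1) = Wm 1 1 := by
  have mem1 : (1 : ℤ) ∈ ({1, 2} : Set ℤ) := Set.mem_insert _ _
  have mem2 : (2 : ℤ) ∈ ({1, 2} : Set ℤ) := Set.mem_insert_of_mem _ rfl
  haveI : Countable (lat a0) := lat_countable a0
  have hWmF : ∀ j j' : ℤ, Wm j j' = ∫ p in Ω ×ˢ (Set.univ : Set ℝ), Fm d Vint u j j' p :=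
    fun j j' => hWm j j'
  have hintF : ∀ j ∈ ({1, 2} : Set ℤ), ∀ j' ∈ ({1, 2} : Set ℤ),
      IntegrableOn (Fm d Vint u j j') (Ω ×ˢ (Set.univ : Set ℝ)) volume := hint
  have hFper : ∀ j ∈ ({1, 2} : Set ℤ), ∀ j' ∈ ({1, 2} : Set ℤ), ∀ R ∈ lat a0,
      ∀ (x : Pt) (z : ℝ), Fm d Vint u j j' (x + R, z) = Fm d Vint u j j' (x, z) := by
    intro j hj j' hj' R hR x z
    simp only [Fm]
    rw [huper j hj R hR, huper j' hj' R hR]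
  -- (1) W₁₂ = 0
  have h12 : Wm 1 2 = 0 := by
    have hemp := rotA_measurePreserving (-(2 * π / 3))
    have hemb := rotA_measurableEmbedding (-(2 * π / 3))
    have hfd' : IsAddFundamentalDomain (lat a0) (rotA (-(2 * π / 3)) ⁻¹' Ω) volume :=
      fd_preimage a0 hΩ (rotA (-(2 * π / 3))) (rotA (2 * π / 3))
        (fun v => rotA_left_inv _ v) (fun v => rotA_right_inv _ v)
        (rotA_add _) hemp (rotneg_lat a0) (rot_lat a0)
    have hrot : ∀ (x : Pt) (z : ℝ),
        Fm d Vint u 1 2 (rotA (-(2 * π / 3)) x, z) = ωc * Fm d Vint u 1 2 (x, z) := by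
      intro x z
      simp only [Fm]
      rw [hurot 1 mem1 x (z - d / 2), hurot 2 mem2 x (z - d / 2)]
      have step : ∀ E A B V' : ℂ,
          (starRingEnd ℂ) (ωc ^ (1 : ℤ) * E * A) * (ωc ^ (2 : ℤ) * E * B) * V'
            = ((starRingEnd ℂ) ωc * (ωc * ωc)) * (((starRingEnd ℂ) E * E) *
                ((starRingEnd ℂ) A * B * V')) := by
        intro E A B V'
        simp only [map_mul]
        rw [zpow_one, zpow_two]
        ring
      rw [step, conj_ωc_mul_sq, conj_exp_eq, one_mul]
    have hi : IntegrableOn (Fm d Vint u 1 2) (Ω ×ˢ (Set.univ : Set ℝ)) volume :=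
      hintF 1 mem1 2 mem2
    have hlam : (fun p : Pt × ℝ => Fm d Vint u 1 2 (rotA (-(2 * π / 3)) p.1, p.2))
        = fun p => ωc * Fm d Vint u 1 2 p := funext fun p => hrot p.1 p.2
    have hi' : IntegrableOn (Fm d Vint u 1 2)
        ((rotA (-(2 * π / 3)) ⁻¹' Ω) ×ˢ (Set.univ : Set ℝ)) volume := by
      have h1 := (cov_integrableOn _ hemp hemb Ω (Fm d Vint u 1 2)).2 hi
      rw [hlam] at h1
      have h2 := h1.const_mul ωc⁻¹
      simpa [IntegrableOn, ← mul_assoc, inv_mul_cancel₀ ωc_ne_zero] using h2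
    have key : Wm 1 2 = ωc * Wm 1 2 := by
      calc Wm 1 2 = ∫ p in Ω ×ˢ (Set.univ : Set ℝ), Fm d Vint u 1 2 p := hWmF 1 2
        _ = ∫ p in (rotA (-(2 * π / 3)) ⁻¹' Ω) ×ˢ (Set.univ : Set ℝ),
              Fm d Vint u 1 2 (rotA (-(2 * π / 3)) p.1, p.2) :=
            (cov_integral _ hemp hemb Ω (Fm d Vint u 1 2)).symm
        _ = ∫ p in (rotA (-(2 * π / 3)) ⁻¹' Ω) ×ˢ (Set.univ : Set ℝ),
              ωc * Fm d Vint u 1 2 p := by rw [show (fun p : Pt × ℝ =>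
                Fm d Vint u 1 2 (rotA (-(2 * π / 3)) p.1, p.2))
                = fun p => ωc * Fm d Vint u 1 2 p from hlam]
        _ = ωc * ∫ p in (rotA (-(2 * π / 3)) ⁻¹' Ω) ×ˢ (Set.univ : Set ℝ),
              Fm d Vint u 1 2 p := integral_const_mul _ _
        _ = ωc * ∫ p in Ω ×ˢ (Set.univ : Set ℝ), Fm d Vint u 1 2 p := by
              rw [fd_integral a0 hΩ hfd' (Fm d Vint u 1 2) (hFper 1 mem1 2 mem2) hi hi']
        _ = ωc * Wm 1 2 := congrArg (ωc * ·) (hWmF 1 2).symm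
    have hz : (1 - ωc) * Wm 1 2 = 0 := by rw [sub_mul, one_mul, ← key, sub_self]
    rcases mul_eq_zero.1 hz with h | h
    · exact absurd (sub_eq_zero.1 h).symm ωc_ne_one
    · exact h
  -- (2) W₂₁ = 0
  have h21 : Wm 2 1 = 0 := by
    have hcc : ∀ p : Pt × ℝ, Fm d Vint u 2 1 p = (starRingEnd ℂ) (Fm d Vint u 1 2 p) := by
      intro p
      simp only [Fm, map_mul, Complex.conj_conj, Complex.conj_ofReal]
      ring
    calc Wm 2 1 = ∫ p in Ω ×ˢ (Set.univ : Set ℝ), (starRingEnd ℂ) (Fm d Vint u 1 2 p) := by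
          rw [hWmF 2 1]; exact integral_congr_ae (Filter.Eventually.of_forall hcc)
      _ = (starRingEnd ℂ) (∫ p in Ω ×ˢ (Set.univ : Set ℝ), Fm d Vint u 1 2 p) := integral_conj
      _ = (starRingEnd ℂ) (Wm 1 2) := by rw [← hWmF 1 2]
      _ = 0 := by rw [h12, map_zero]
  -- (4) W₁₁ real
  have hreal : (starRingEnd ℂ) (Wm 1 1) = Wm 1 1 := by
    have hcc : ∀ p : Pt × ℝ, (starRingEnd ℂ) (Fm d Vint u 1 1 p) = Fm d Vint u 1 1 p := by
      intro p
      simp only [Fm, map_mul, Complex.conj_conj, Complex.conj_ofReal]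
      ring
    calc (starRingEnd ℂ) (Wm 1 1)
        = ∫ p in Ω ×ˢ (Set.univ : Set ℝ), (starRingEnd ℂ) (Fm d Vint u 1 1 p) := by
          rw [hWmF 1 1, ← integral_conj]
      _ = ∫ p in Ω ×ˢ (Set.univ : Set ℝ), Fm d Vint u 1 1 p :=
          integral_congr_ae (Filter.Eventually.of_forall hcc)
      _ = Wm 1 1 := (hWmF 1 1).symm
  -- (3) W₁₁ = W₂₂
  have h1122 : Wm 1 1 = Wm 2 2 := by
    have hNmp := rotA_measurePreserving π
    have hNemb := rotA_measurableEmbedding π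
    have hNinv : ∀ v : Pt, rotA π (rotA π v) = v := fun v => by
      rw [rotA_pi, rotA_pi, neg_neg]
    have hNfd : IsAddFundamentalDomain (lat a0) (rotA π ⁻¹' Ω) volume :=
      fd_preimage a0 hΩ (rotA π) (rotA π) hNinv hNinv (rotA_add _) hNmp
        (rotpi_lat a0) (rotpi_lat a0)
    have hGeq : (fun p : Pt × ℝ => Fm d Vint u 1 1 (rotA π p.1, p.2)) = Fm d Vint u 2 2 := by
      funext p
      simp only [Fm, rotA_pi, hu21 p.1 (p.2 - d / 2), Complex.conj_conj]
      ring
    have hGper : ∀ R ∈ lat a0, ∀ (x : Pt) (z : ℝ),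
        Fm d Vint u 1 1 (rotA π (x + R), z) = Fm d Vint u 1 1 (rotA π x, z) := by
      intro R hR x z
      rw [rotA_pi, rotA_pi, show -(x + R) = -x + -R by abel,
        hFper 1 mem1 1 mem1 (-R) (neg_mem hR)]
    have hGΩ : IntegrableOn (fun p : Pt × ℝ => Fm d Vint u 1 1 (rotA π p.1, p.2))
        (Ω ×ˢ (Set.univ : Set ℝ)) volume := by
      rw [hGeq]; exact hintF 2 mem2 2 mem2
    have hGΩ' : IntegrableOn (fun p : Pt × ℝ => Fm d Vint u 1 1 (rotA π p.1, p.2))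
        ((rotA π ⁻¹' Ω) ×ˢ (Set.univ : Set ℝ)) volume :=
      (cov_integrableOn _ hNmp hNemb Ω (Fm d Vint u 1 1)).2 (hintF 1 mem1 1 mem1)
    calc Wm 1 1 = ∫ p in Ω ×ˢ (Set.univ : Set ℝ), Fm d Vint u 1 1 p := hWmF 1 1
      _ = ∫ p in (rotA π ⁻¹' Ω) ×ˢ (Set.univ : Set ℝ),
            Fm d Vint u 1 1 (rotA π p.1, p.2) :=
          (cov_integral _ hNmp hNemb Ω (Fm d Vint u 1 1)).symm
      _ = ∫ p in Ω ×ˢ (Set.univ : Set ℝ), Fm d Vint u 1 1 (rotA π p.1, p.2) :=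
          fd_integral a0 hΩ hNfd _ hGper hGΩ hGΩ'
      _ = ∫ p in Ω ×ˢ (Set.univ : Set ℝ), Fm d Vint u 2 2 p := by rw [hGeq]
      _ = Wm 2 2 := (hWmF 2 2).symm
  exact ⟨h12, h21, h1122, hreal⟩
end
end

section
/- Let d > 0 and let f, g : ℝ² × ℝ → ℂ be 𝕃-periodic in their first variable, given by in-plane Fourier expansions f(x, z) = Σ_{G ∈ 𝕃*} f_G(z) e^{iG·x} and g(x, z) = Σ_{G ∈ 𝕃*} g_G(z) e^{iG·x} with f_G, g_G ∈ L²(ℝ) satisfying Σ_{G ∈ 𝕃*} ‖f_G‖_{L²(ℝ)} < ∞ and Σ_{G ∈ 𝕃*} ‖g_G‖_{L²(ℝ)} < ∞. Then for every X ∈ ℝ²: ((f,g))_d^{+−}(X) = |Ω| Σ_{G ∈ 𝕃*} (∫_ℝ conj(f_G(z − d/2)) g_G(z + d/2) dz) e^{iG·(JX)}, the series converging absolutely. -/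
noncomputable section

open MeasureTheory Real Complex

open Pointwise Filter Topology

namespace Stmt19Aux

lemma dot_add_right (G v w : Pt) : dot G (v + w) = dot G v + dot G w := by
  simp [dot, Prod.fst_add, Prod.snd_add]; ring

lemma dot_sub_right (G v w : Pt) : dot G (v - w) = dot G v - dot G w := by
  simp [dot, Prod.fst_sub, Prod.snd_sub]; ring

lemma dot_smul_right (G : Pt) (c : ℝ) (v : Pt) : dot G (c • v) = c * dot G v := by
  simp [dot, Prod.smul_fst, Prod.smul_snd, smul_eq_mul]; ring

lemma dot_self_pos {G : Pt} (hG : G ≠ 0) : 0 < dot G G := by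
  rcases G with ⟨a, b⟩
  have : a ≠ 0 ∨ b ≠ 0 := by
    by_contra h
    push_neg at h
    exact hG (by simp [Prod.ext_iff, h.1, h.2])
  have h1 : 0 < a^2 + b^2 := by
    rcases this with h | h
    · positivity
    · positivity
  simpa [dot, sq] using h1

lemma dualVec_eq (a0 : ℝ) (m : ℤ × ℤ) :
    dualVec a0 m = (((m.1 : ℝ) + m.2) * (2 * π / a0),
      ((m.2 : ℝ) - m.1) * (2 * π / (Real.sqrt 3 * a0))) := by
  simp only [dualVec, as1, as2, Prod.smul_mk, Prod.mk_add_mk, smul_eq_mul, Prod.mk.injEq]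
  constructor <;> ring

lemma dualVec_sub (a0 : ℝ) (m m' : ℤ × ℤ) :
    dualVec a0 (m - m') = dualVec a0 m - dualVec a0 m' := by
  simp only [dualVec_eq, Prod.mk_sub_mk, Prod.fst_sub, Prod.snd_sub, Int.cast_sub, Prod.mk.injEq]
  constructor <;> ring

lemma dualVec_zero (a0 : ℝ) : dualVec a0 0 = 0 := by
  simp [dualVec_eq, Prod.ext_iff]

lemma sqrt3_pos : 0 < Real.sqrt 3 := Real.sqrt_pos.2 (by norm_num)

lemma dualVec_ne_zero {a0 : ℝ} (ha0 : 0 < a0) {m : ℤ × ℤ} (hm : m ≠ 0) :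
    dualVec a0 m ≠ 0 := by
  intro h
  rw [dualVec_eq] at h
  have h1 : ((m.1 : ℝ) + m.2) * (2 * π / a0) = 0 := congrArg Prod.fst h
  have h2 : ((m.2 : ℝ) - m.1) * (2 * π / (Real.sqrt 3 * a0)) = 0 := congrArg Prod.snd h
  have hc1 : (2 : ℝ) * π / a0 ≠ 0 := by
    have := Real.pi_pos; positivity
  have hc2 : (2 : ℝ) * π / (Real.sqrt 3 * a0) ≠ 0 := by
    have := Real.pi_pos; have := sqrt3_pos; positivity
  have e1 : (m.1 : ℝ) + m.2 = 0 := by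
    rcases mul_eq_zero.1 h1 with h' | h'
    · exact h'
    · exact absurd h' hc1
  have e2 : (m.2 : ℝ) - m.1 = 0 := by
    rcases mul_eq_zero.1 h2 with h' | h'
    · exact h'
    · exact absurd h' hc2
  have hm1 : (m.1 : ℝ) = 0 := by linarith
  have hm2 : (m.2 : ℝ) = 0 := by linarith
  exact hm (Prod.ext_iff.2 ⟨by exact_mod_cast hm1, by exact_mod_cast hm2⟩)

lemma dot_dual_lat {a0 : ℝ} (ha0 : 0 < a0) (m : ℤ × ℤ) :
    ∀ R ∈ lat a0, ∃ k : ℤ, dot (dualVec a0 m) R = 2 * π * k := by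
  have hφadd : ∀ v w : Pt, dot (dualVec a0 m) (v + w) = dot (dualVec a0 m) v + dot (dualVec a0 m) w :=
    dot_add_right _
  set φ : Pt →+ ℝ := AddMonoidHom.mk' (fun v => dot (dualVec a0 m) v) hφadd with hφ
  have key : lat a0 ≤ (AddSubgroup.zmultiples (2 * π)).comap φ := by
    rw [lat, AddSubgroup.closure_le]
    intro v hv
    have ha0' : a0 ≠ 0 := ne_of_gt ha0
    have hs3 : Real.sqrt 3 ≠ 0 := ne_of_gt sqrt3_pos
    rcases hv with hv | hv
    · -- v = av1
      subst hv
      simp only [Set.mem_preimage, SetLike.mem_coe, AddSubgroup.mem_comap,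
        AddSubgroup.mem_zmultiples_iff]
      refine ⟨m.1, ?_⟩
      simp only [hφ, AddMonoidHom.mk'_apply, zsmul_eq_mul]
      rw [dualVec_eq, av1]
      simp only [dot]
      field_simp
      ring
    · -- v = av2
      simp only [Set.mem_singleton_iff] at hv
      subst hv
      simp only [Set.mem_preimage, SetLike.mem_coe, AddSubgroup.mem_comap,
        AddSubgroup.mem_zmultiples_iff]
      refine ⟨m.2, ?_⟩
      simp only [hφ, AddMonoidHom.mk'_apply, zsmul_eq_mul]
      rw [dualVec_eq, av2]
      simp only [dot]
      field_simp
      ring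
  intro R hR
  have := key hR
  simp only [AddSubgroup.mem_comap, AddSubgroup.mem_zmultiples_iff, zsmul_eq_mul] at this
  obtain ⟨k, hk⟩ := this
  exact ⟨k, by simpa [hφ, mul_comm] using hk.symm⟩

end Stmt19Aux
namespace Stmt19Aux

open MeasureTheory

lemma range_pair (a0 : ℝ) : Set.range ![av1 a0, av2 a0] = {av1 a0, av2 a0} := by
  simp [Matrix.range_cons, Matrix.range_empty, Set.pair_comm]

lemma lat_eq_span (a0 : ℝ) :
    lat a0 = (Submodule.span ℤ (Set.range ![av1 a0, av2 a0])).toAddSubgroup := by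
  rw [lat, ← Submodule.span_int_eq_addSubgroupClosure, range_pair]

lemma countable_lat (a0 : ℝ) : Countable (lat a0) := by
  rw [lat_eq_span]
  have : Countable (Submodule.span ℤ (Set.range ![av1 a0, av2 a0])) := inferInstance
  exact this

lemma eph_periodic {a0 : ℝ} (ha0 : 0 < a0) (m : ℤ × ℤ) (g : lat a0) (x : Pt) :
    Complex.exp (Complex.I * (dot (dualVec a0 m) ((g : Pt) + x) : ℂ)) =
      Complex.exp (Complex.I * (dot (dualVec a0 m) x : ℂ)) := by
  obtain ⟨k, hk⟩ := dot_dual_lat ha0 m (g : Pt) g.2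
  rw [dot_add_right, hk]
  push_cast
  rw [mul_add, Complex.exp_add]
  have : Complex.exp (Complex.I * (2 * ↑π * ↑k)) = 1 := by
    rw [show Complex.I * (2 * ↑π * ↑k) = (k : ℂ) * (2 * ↑π * Complex.I) by ring]
    exact Complex.exp_int_mul_two_pi_mul_I k
  rw [this, one_mul]

lemma orth {a0 : ℝ} (ha0 : 0 < a0) {Ω : Set Pt}
    (hΩ : IsAddFundamentalDomain (lat a0) Ω volume)
    {m : ℤ × ℤ} (hm : m ≠ 0) :
    ∫ x in Ω, Complex.exp (Complex.I * (dot (dualVec a0 m) x : ℂ)) = 0 := by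
  haveI := countable_lat a0
  set G : Pt := dualVec a0 m with hG
  set F : Pt → ℂ := fun x => Complex.exp (Complex.I * (dot G x : ℂ)) with hF
  have hGne : G ≠ 0 := dualVec_ne_zero ha0 hm
  have hGG : dot G G ≠ 0 := ne_of_gt (dot_self_pos hGne)
  set t : Pt := (π / dot G G) • G with ht
  have hdotGt : dot G t = π := by
    rw [ht, dot_smul_right]; field_simp
  have hΩ' : IsAddFundamentalDomain (lat a0) (t +ᵥ Ω) volume := hΩ.vadd_of_comm t
  have hper : ∀ (g : lat a0) (x : Pt), F (g +ᵥ x) = F x := by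
    intro g x
    show F ((g : Pt) + x) = F x
    exact eph_periodic ha0 m g x
  have h1 : ∫ x in Ω, F x = ∫ x in t +ᵥ Ω, F x := hΩ.setIntegral_eq hΩ' hper
  have himg : t +ᵥ Ω = (fun x : Pt => t + x) '' Ω := by
    ext y
    constructor
    · intro hy
      obtain ⟨w, hw, rfl⟩ := hy
      exact ⟨w, hw, rfl⟩
    · rintro ⟨w, hw, rfl⟩
      exact ⟨w, hw, rfl⟩
  have h2 : ∫ x in t +ᵥ Ω, F x = ∫ x in Ω, F (t + x) := by
    rw [himg]
    exact (measurePreserving_add_left (volume : Measure Pt) t).setIntegral_image_emb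
      (MeasurableEquiv.addLeft t).measurableEmbedding F Ω
  have h3 : ∀ x, F (t + x) = -F x := by
    intro x
    have hd : dot G (t + x) = π + dot G x := by rw [dot_add_right, hdotGt]
    rw [hF]
    simp only [hd]
    push_cast
    rw [mul_add, Complex.exp_add]
    rw [show Complex.I * (π : ℂ) = (π : ℂ) * Complex.I by ring, Complex.exp_pi_mul_I]
    ring
  have h4 : ∫ x in Ω, F x = -∫ x in Ω, F x := by
    calc ∫ x in Ω, F x = ∫ x in t +ᵥ Ω, F x := h1
      _ = ∫ x in Ω, F (t + x) := h2
      _ = ∫ x in Ω, -F x := by simp only [h3]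
      _ = -∫ x in Ω, F x := integral_neg _
  linear_combination h4 / 2

lemma vol_lt_top {a0 : ℝ} (ha0 : 0 < a0) {Ω : Set Pt}
    (hΩ : IsAddFundamentalDomain (lat a0) Ω volume) : volume Ω < ⊤ := by
  have ha0' : a0 ≠ 0 := ne_of_gt ha0
  have hs3 : Real.sqrt 3 ≠ 0 := ne_of_gt sqrt3_pos
  have hLI : LinearIndependent ℝ ![av1 a0, av2 a0] := by
    rw [LinearIndependent.pair_iff]
    intro s t hst
    have h1 : s * (a0 / 2) + t * (a0 / 2) = 0 := by
      have := congrArg Prod.fst hst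
      simpa [av1, av2, Prod.smul_mk, smul_eq_mul] using this
    have h2 : s * -(Real.sqrt 3 * a0 / 2) + t * (Real.sqrt 3 * a0 / 2) = 0 := by
      have := congrArg Prod.snd hst
      simpa [av1, av2, Prod.smul_mk, smul_eq_mul] using this
    have hst1 : s + t = 0 := by
      have h1' : (s + t) * (a0 / 2) = 0 := by ring_nf; ring_nf at h1; linarith
      rcases mul_eq_zero.1 h1' with h | h
      · exact h
      · have : a0 / 2 ≠ 0 := by positivity
        exact absurd h this
    have hst2 : t - s = 0 := by
      have h2' : (t - s) * (Real.sqrt 3 * a0 / 2) = 0 := by ring_nf; ring_nf at h2; linarith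
      rcases mul_eq_zero.1 h2' with h | h
      · exact h
      · have : Real.sqrt 3 * a0 / 2 ≠ 0 := by positivity
        exact absurd h this
    constructor <;> linarith
  have hcard : Fintype.card (Fin 2) = Module.finrank ℝ Pt := by
    simp [Pt]
  let b : Module.Basis (Fin 2) ℝ Pt := basisOfLinearIndependentOfCardEqFinrank hLI hcard
  have hbcoe : ⇑b = ![av1 a0, av2 a0] := coe_basisOfLinearIndependentOfCardEqFinrank hLI hcard
  have hlat : lat a0 = (Submodule.span ℤ (Set.range ⇑b)).toAddSubgroup := by
    rw [hbcoe]
    exact lat_eq_span a0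
  haveI : Countable ((Submodule.span ℤ (Set.range ⇑b)).toAddSubgroup) := by
    have : Countable (Submodule.span ℤ (Set.range ⇑b)) := inferInstance
    exact this
  have hfd := ZSpan.isAddFundamentalDomain' b (volume : Measure Pt)
  rw [hlat] at hΩ
  have hmeq := hΩ.measure_eq hfd
  rw [hmeq]
  exact (ZSpan.fundamentalDomain_isBounded b).measure_lt_top

end Stmt19Aux
namespace Stmt19Aux

open MeasureTheory Filter Topology
open scoped ENNReal NNReal

lemma nnnorm_eph (G x : Pt) : ‖Complex.exp (Complex.I * (dot G x : ℂ))‖₊ = 1 := by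
  apply NNReal.eq
  have : Complex.I * (dot G x : ℂ) = (dot G x : ℂ) * Complex.I := mul_comm _ _
  rw [coe_nnnorm, this]
  simpa using Complex.norm_exp_ofReal_mul_I (dot G x)

lemma phase_cont (G : Pt) : Continuous (fun p : Pt × ℝ => Complex.exp (Complex.I * (dot G p.1 : ℂ))) := by
  apply Complex.continuous_exp.comp
  apply continuous_const.mul
  apply Complex.continuous_ofReal.comp
  simp only [dot]
  fun_prop

lemma eLp_prod (Ω : Set Pt) (c : ℝ → ℂ) (hc : AEStronglyMeasurable c (volume : Measure ℝ)) (G : Pt) :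
    eLpNorm (fun p : Pt × ℝ => c p.2 * Complex.exp (Complex.I * (dot G p.1 : ℂ))) 2
      (((volume : Measure Pt).restrict Ω).prod (volume : Measure ℝ))
    = (volume Ω) ^ ((2:ℝ)⁻¹) * eLpNorm c 2 (volume : Measure ℝ) := by
  rw [eLpNorm_eq_lintegral_rpow_enorm_toReal (two_ne_zero) ENNReal.ofNat_ne_top,
      eLpNorm_eq_lintegral_rpow_enorm_toReal (two_ne_zero) ENNReal.ofNat_ne_top]
  have htr : (2 : ℝ≥0∞).toReal = (2 : ℝ) := by simp
  rw [htr]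
  have hpt : ∀ p : Pt × ℝ,
      (‖c p.2 * Complex.exp (Complex.I * (dot G p.1 : ℂ))‖ₑ) ^ (2:ℝ)
      = (fun _ : Pt => (1 : ℝ≥0∞)) p.1 * (fun z => (‖c z‖ₑ) ^ (2:ℝ)) p.2 := by
    intro p
    simp only [enorm_mul, enorm_eq_nnnorm, nnnorm_mul, nnnorm_eph, ENNReal.coe_mul, ENNReal.coe_one, mul_one, one_mul]
  simp only [hpt]
  rw [lintegral_prod_mul aemeasurable_const
    ((hc.enorm).pow_const _)]
  rw [lintegral_one, Measure.restrict_apply_univ]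
  rw [ENNReal.mul_rpow_of_nonneg _ _ (by norm_num : (0:ℝ) ≤ 1/2)]
  congr 1
  rw [one_div]

lemma memLp_prod {Ω : Set Pt} (hΩfin : volume Ω < ⊤) {c : ℝ → ℂ}
    (hc : MemLp c 2 (volume : Measure ℝ)) (G : Pt) :
    MemLp (fun p : Pt × ℝ => c p.2 * Complex.exp (Complex.I * (dot G p.1 : ℂ))) 2
      (((volume : Measure Pt).restrict Ω).prod (volume : Measure ℝ)) := by
  constructor
  · exact (hc.1.comp_quasiMeasurePreserving Measure.quasiMeasurePreserving_snd).mul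
      (phase_cont G).aestronglyMeasurable
  · rw [eLp_prod Ω c hc.1 G]
    exact ENNReal.mul_lt_top
      (ENNReal.rpow_lt_top_of_nonneg (by norm_num) hΩfin.ne) hc.2

lemma coeFn_toLp_sum {ι : Type*} {μ : Measure (Pt × ℝ)} (s : Finset ι) (f : ι → Pt × ℝ → ℂ)
    (hf : ∀ i, MemLp (f i) 2 μ) :
    ⇑(∑ i ∈ s, (hf i).toLp (f i)) =ᵐ[μ] fun p => ∑ i ∈ s, f i p := by
  induction s using Finset.cons_induction with
  | empty => simp only [Finset.sum_empty]; exact Lp.coeFn_zero ℂ 2 μ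
  | cons a s ha ih =>
    rw [Finset.sum_cons]
    filter_upwards [Lp.coeFn_add ((hf a).toLp (f a)) (∑ i ∈ s, (hf i).toLp (f i)), ih,
      (hf a).coeFn_toLp] with p h1 h2 h3
    simp only [Finset.sum_cons, h1, Pi.add_apply, h2, h3]

lemma coe_ae {μ : Measure (Pt × ℝ)} (Φ : ℤ × ℤ → Pt × ℝ → ℂ) (hmem : ∀ m, MemLp (Φ m) 2 μ)
    (Flp : Lp ℂ 2 μ) (hsum : HasSum (fun m => (hmem m).toLp (Φ m)) Flp)
    (F' : Pt × ℝ → ℂ) (hpt : ∀ p, HasSum (fun m => Φ m p) (F' p)) :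
    F' =ᵐ[μ] ⇑Flp := by
  classical
  set e : ℕ ≃ ℤ × ℤ := (Denumerable.eqv (ℤ × ℤ)).symm with he
  set S : ℕ → Pt × ℝ → ℂ := fun n p => ∑ i ∈ Finset.range n, Φ (e i) p with hS
  set T : ℕ → Lp ℂ 2 μ := fun n => ∑ i ∈ Finset.range n, (hmem (e i)).toLp (Φ (e i)) with hT
  have hcoeT : ∀ n, ⇑(T n) =ᵐ[μ] S n := fun n => coeFn_toLp_sum _ _ _
  have hTlim : Tendsto T atTop (𝓝 Flp) := by
    have h1 := ((Equiv.hasSum_iff e).2 hsum).tendsto_sum_nat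
    simpa [Function.comp] using h1
  have heLp : Tendsto (fun n => eLpNorm (S n - ⇑Flp) 2 μ) atTop (𝓝 0) := by
    have h1 : ∀ n, eLpNorm (S n - ⇑Flp) 2 μ = ENNReal.ofReal ‖T n - Flp‖ := by
      intro n
      rw [Lp.norm_def, ENNReal.ofReal_toReal (Lp.eLpNorm_ne_top _)]
      apply eLpNorm_congr_ae
      filter_upwards [hcoeT n, Lp.coeFn_sub (T n) Flp] with p h1 h2
      simp only [Pi.sub_apply, h2, h1]
    simp only [h1]
    have h2 : Tendsto (fun n => ‖T n - Flp‖) atTop (𝓝 0) := by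
      rw [← tendsto_sub_nhds_zero_iff] at hTlim
      simpa [Function.comp_def] using (continuous_norm.tendsto 0).comp hTlim
    have := (ENNReal.continuous_ofReal.tendsto 0).comp h2
    simpa [Function.comp_def] using this
  have hmeasS : ∀ n, AEStronglyMeasurable (S n) μ := fun n =>
    Finset.aestronglyMeasurable_fun_sum _ fun i _ => (hmem (e i)).1
  have hIM := tendstoInMeasure_of_tendsto_eLpNorm (p := 2) (by norm_num) hmeasS
    (Lp.aestronglyMeasurable Flp) heLp
  obtain ⟨ns, hns, hae⟩ := hIM.exists_seq_tendsto_ae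
  filter_upwards [hae] with p hp
  have h2 : Tendsto (fun n => S n p) atTop (𝓝 (F' p)) := by
    have := ((Equiv.hasSum_iff e).2 (hpt p)).tendsto_sum_nat
    simpa [Function.comp, hS] using this
  exact tendsto_nhds_unique (h2.comp hns.tendsto_atTop) hp

end Stmt19Aux
namespace Stmt19Aux

open MeasureTheory Filter Topology
open scoped ENNReal NNReal

lemma core {a0 : ℝ} (ha0 : 0 < a0) {Ω : Set Pt}
    (hΩ : IsAddFundamentalDomain (lat a0) Ω volume)
    (F G : Pt → ℝ → ℂ) (fc gc : ℤ × ℤ → ℝ → ℂ)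
    (hfc2 : ∀ m, MemLp (fc m) 2 (volume : Measure ℝ))
    (hgc2 : ∀ m, MemLp (gc m) 2 (volume : Measure ℝ))
    (hfcs : Summable (fun m : ℤ × ℤ => (eLpNorm (fc m) 2 volume).toReal))
    (hgcs : Summable (fun m : ℤ × ℤ => (eLpNorm (gc m) 2 volume).toReal))
    (hfexp : ∀ (x : Pt) (z : ℝ), HasSum
      (fun m : ℤ × ℤ => fc m z * Complex.exp (Complex.I * (dot (dualVec a0 m) x : ℂ)))
      (F x z))
    (hgexp : ∀ (x : Pt) (z : ℝ), HasSum
      (fun m : ℤ × ℤ => gc m z * Complex.exp (Complex.I * (dot (dualVec a0 m) x : ℂ)))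
      (G x z)) :
    Summable (fun m : ℤ × ℤ =>
      ‖(((volume Ω).toReal : ℝ) : ℂ) * ∫ z : ℝ, (starRingEnd ℂ) (fc m z) * gc m z‖) ∧
    HasSum (fun m : ℤ × ℤ =>
        (((volume Ω).toReal : ℝ) : ℂ) * ∫ z : ℝ, (starRingEnd ℂ) (fc m z) * gc m z)
      (∫ p in Ω ×ˢ (Set.univ : Set ℝ), (starRingEnd ℂ) (F p.1 p.2) * G p.1 p.2) := by
  classical
  have hΩfin : volume Ω < ⊤ := vol_lt_top ha0 hΩ
  set μ : Measure (Pt × ℝ) := ((volume : Measure Pt).restrict Ω).prod (volume : Measure ℝ)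
    with hμdef
  set Φ : ℤ × ℤ → Pt × ℝ → ℂ :=
    fun m p => fc m p.2 * Complex.exp (Complex.I * (dot (dualVec a0 m) p.1 : ℂ)) with hΦ
  set Ψ : ℤ × ℤ → Pt × ℝ → ℂ :=
    fun m p => gc m p.2 * Complex.exp (Complex.I * (dot (dualVec a0 m) p.1 : ℂ)) with hΨ
  have hΦmem : ∀ m, MemLp (Φ m) 2 μ := fun m => memLp_prod hΩfin (hfc2 m) _
  have hΨmem : ∀ m, MemLp (Ψ m) 2 μ := fun m => memLp_prod hΩfin (hgc2 m) _
  set cΩ : ℝ := ((volume Ω) ^ ((2:ℝ)⁻¹)).toReal with hcΩ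
  have hΦnorm : ∀ m, ‖(hΦmem m).toLp (Φ m)‖ = cΩ * (eLpNorm (fc m) 2 volume).toReal := by
    intro m
    rw [Lp.norm_toLp, eLp_prod Ω (fc m) (hfc2 m).1 _, ENNReal.toReal_mul]
  have hΨnorm : ∀ m, ‖(hΨmem m).toLp (Ψ m)‖ = cΩ * (eLpNorm (gc m) 2 volume).toReal := by
    intro m
    rw [Lp.norm_toLp, eLp_prod Ω (gc m) (hgc2 m).1 _, ENNReal.toReal_mul]
  have hΦsummable : Summable (fun m => (hΦmem m).toLp (Φ m)) := by
    apply Summable.of_norm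
    simp only [hΦnorm]
    exact hfcs.mul_left cΩ
  have hΨsummable : Summable (fun m => (hΨmem m).toLp (Ψ m)) := by
    apply Summable.of_norm
    simp only [hΨnorm]
    exact hgcs.mul_left cΩ
  set Flp : Lp ℂ 2 μ := ∑' m, (hΦmem m).toLp (Φ m) with hFlpdef
  set Glp : Lp ℂ 2 μ := ∑' m, (hΨmem m).toLp (Ψ m) with hGlpdef
  have hFlp : HasSum (fun m => (hΦmem m).toLp (Φ m)) Flp := hΦsummable.hasSum
  have hGlp : HasSum (fun m => (hΨmem m).toLp (Ψ m)) Glp := hΨsummable.hasSum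
  have hFae : (fun p : Pt × ℝ => F p.1 p.2) =ᵐ[μ] ⇑Flp :=
    coe_ae Φ hΦmem Flp hFlp _ (fun p => hfexp p.1 p.2)
  have hGae : (fun p : Pt × ℝ => G p.1 p.2) =ᵐ[μ] ⇑Glp :=
    coe_ae Ψ hΨmem Glp hGlp _ (fun p => hgexp p.1 p.2)
  -- inner products
  have hinner : ∀ m m' : ℤ × ℤ,
      (inner ℂ ((hΦmem m).toLp (Φ m)) ((hΨmem m').toLp (Ψ m')) : ℂ)
      = (∫ x in Ω, Complex.exp (Complex.I * (dot (dualVec a0 (m' - m)) x : ℂ))) *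
        ∫ z : ℝ, (starRingEnd ℂ) (fc m z) * gc m' z := by
    intro m m'
    rw [L2.inner_def]
    have h1 : (fun p => (inner ℂ (((hΦmem m).toLp (Φ m)) p) (((hΨmem m').toLp (Ψ m')) p) : ℂ))
        =ᵐ[μ] fun p =>
          (fun x => Complex.exp (Complex.I * (dot (dualVec a0 (m' - m)) x : ℂ))) p.1 *
          (fun z => (starRingEnd ℂ) (fc m z) * gc m' z) p.2 := by
      filter_upwards [(hΦmem m).coeFn_toLp, (hΨmem m').coeFn_toLp] with p h1 h2
      rw [h1, h2, RCLike.inner_apply, hΦ, hΨ]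
      simp only
      rw [map_mul, ← Complex.exp_conj, map_mul, Complex.conj_I, Complex.conj_ofReal]
      rw [show dualVec a0 (m' - m) = dualVec a0 m' - dualVec a0 m from dualVec_sub a0 m' m]
      have hsplit : Complex.I * ((dot (dualVec a0 m' - dualVec a0 m) p.1 : ℝ) : ℂ)
          = Complex.I * (dot (dualVec a0 m') p.1 : ℝ) + -Complex.I * (dot (dualVec a0 m) p.1 : ℝ) := by
        have : dot (dualVec a0 m' - dualVec a0 m) p.1
            = dot (dualVec a0 m') p.1 - dot (dualVec a0 m) p.1 := by
          simp [dot, Prod.fst_sub, Prod.snd_sub]; ring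
        rw [this]; push_cast; ring
      rw [hsplit, Complex.exp_add]
      ring
    rw [integral_congr_ae h1]
    rw [hμdef]
    exact integral_prod_mul (μ := (volume : Measure Pt).restrict Ω) (ν := (volume : Measure ℝ))
      (fun x => Complex.exp (Complex.I * (dot (dualVec a0 (m' - m)) x : ℂ)))
      (fun z => (starRingEnd ℂ) (fc m z) * gc m' z)
  have hdiag : ∀ m : ℤ × ℤ,
      (inner ℂ ((hΦmem m).toLp (Φ m)) ((hΨmem m).toLp (Ψ m)) : ℂ)
      = (((volume Ω).toReal : ℝ) : ℂ) * ∫ z : ℝ, (starRingEnd ℂ) (fc m z) * gc m z := by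
    intro m
    rw [hinner m m]
    congr 1
    rw [sub_self, dualVec_zero]
    have : ∀ x : Pt, Complex.exp (Complex.I * (dot (0 : Pt) x : ℂ)) = 1 := by
      intro x; simp [dot]
    simp only [this]
    rw [setIntegral_const]
    simp [Complex.real_smul, Measure.real]
  have hoff : ∀ m m' : ℤ × ℤ, m ≠ m' →
      (inner ℂ ((hΦmem m).toLp (Φ m)) ((hΨmem m').toLp (Ψ m')) : ℂ) = 0 := by
    intro m m' hne
    rw [hinner m m', orth ha0 hΩ (sub_ne_zero.2 (Ne.symm hne)), zero_mul]
  -- sum of inner products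
  have hFfixed : ∀ m' : ℤ × ℤ,
      (inner ℂ Flp ((hΨmem m').toLp (Ψ m')) : ℂ)
      = inner ℂ ((hΦmem m').toLp (Φ m')) ((hΨmem m').toLp (Ψ m')) := by
    intro m'
    have h1 : HasSum (fun m => (inner ℂ ((hΨmem m').toLp (Ψ m')) ((hΦmem m).toLp (Φ m)) : ℂ))
        (inner ℂ ((hΨmem m').toLp (Ψ m')) Flp) := (innerSL ℂ ((hΨmem m').toLp (Ψ m'))).hasSum hFlp
    have h2 : HasSum (fun m => (inner ℂ ((hΨmem m').toLp (Ψ m')) ((hΦmem m).toLp (Φ m)) : ℂ))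
        (inner ℂ ((hΨmem m').toLp (Ψ m')) ((hΦmem m').toLp (Φ m'))) := by
      apply hasSum_single m'
      intro m hm
      rw [← inner_conj_symm, hoff m m' hm, map_zero]
    have h3 := h1.unique h2
    calc (inner ℂ Flp ((hΨmem m').toLp (Ψ m')) : ℂ)
        = (starRingEnd ℂ) (inner ℂ ((hΨmem m').toLp (Ψ m')) Flp) := (inner_conj_symm _ _).symm
      _ = (starRingEnd ℂ) (inner ℂ ((hΨmem m').toLp (Ψ m')) ((hΦmem m').toLp (Φ m'))) := by rw [h3]
      _ = inner ℂ ((hΦmem m').toLp (Φ m')) ((hΨmem m').toLp (Ψ m')) := inner_conj_symm _ _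
  have hmain : HasSum
      (fun m => (inner ℂ ((hΦmem m).toLp (Φ m)) ((hΨmem m).toLp (Ψ m)) : ℂ))
      (inner ℂ Flp Glp : ℂ) := by
    have h1 : HasSum (fun m' => (inner ℂ Flp ((hΨmem m').toLp (Ψ m')) : ℂ)) (inner ℂ Flp Glp : ℂ) :=
      (innerSL ℂ Flp).hasSum hGlp
    simp only [hFfixed] at h1
    exact h1
  -- identify inner Flp Glp with the set integral
  have hrestrict : (volume : Measure (Pt × ℝ)).restrict (Ω ×ˢ (Set.univ : Set ℝ)) = μ := by
    rw [hμdef, ← Measure.restrict_univ (μ := (volume : Measure ℝ)),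
      Measure.prod_restrict, ← Measure.volume_eq_prod]
  have hint : (inner ℂ Flp Glp : ℂ)
      = ∫ p in Ω ×ˢ (Set.univ : Set ℝ), (starRingEnd ℂ) (F p.1 p.2) * G p.1 p.2 := by
    rw [L2.inner_def]
    have : ∫ p in Ω ×ˢ (Set.univ : Set ℝ), (starRingEnd ℂ) (F p.1 p.2) * G p.1 p.2
        = ∫ p, (starRingEnd ℂ) (F p.1 p.2) * G p.1 p.2 ∂μ := by
      rw [← hrestrict]
    rw [this]
    apply integral_congr_ae
    filter_upwards [hFae, hGae] with p h1 h2
    rw [RCLike.inner_apply, h1, h2, mul_comm]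
  constructor
  · -- summability of norms
    have hABsum : Summable (fun m : ℤ × ℤ =>
        (eLpNorm (fc m) 2 volume).toReal * (eLpNorm (gc m) 2 volume).toReal) := by
      apply Summable.of_nonneg_of_le
        (fun m => mul_nonneg ENNReal.toReal_nonneg ENNReal.toReal_nonneg)
        (fun m => ?_) (hgcs.mul_left (∑' m : ℤ × ℤ, (eLpNorm (fc m) 2 volume).toReal))
      have h1 : (eLpNorm (fc m) 2 volume).toReal
          ≤ ∑' m : ℤ × ℤ, (eLpNorm (fc m) 2 volume).toReal :=
        Summable.le_tsum hfcs m fun _ _ => ENNReal.toReal_nonneg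
      exact mul_le_mul_of_nonneg_right h1 ENNReal.toReal_nonneg
    apply Summable.of_nonneg_of_le (fun m => norm_nonneg _) (fun m => ?_)
      ((hABsum.mul_left (cΩ * cΩ)))
    rw [← hdiag m]
    calc ‖(inner ℂ ((hΦmem m).toLp (Φ m)) ((hΨmem m).toLp (Ψ m)) : ℂ)‖
        ≤ ‖(hΦmem m).toLp (Φ m)‖ * ‖(hΨmem m).toLp (Ψ m)‖ := norm_inner_le_norm _ _
      _ = cΩ * cΩ * ((eLpNorm (fc m) 2 volume).toReal * (eLpNorm (gc m) 2 volume).toReal) := by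
          rw [hΦnorm, hΨnorm]; ring
  · -- the HasSum statement
    have := hmain
    simp only [hdiag] at this
    rwa [hint] at this

end Stmt19Aux
/-- Fourier representation of the interlayer pairing:
((f,g))_d^{+−}(X) = |Ω| Σ_{G∈𝕃*} (∫ conj(f_G(z−d/2)) g_G(z+d/2) dz) e^{iG·(JX)},
with the series converging absolutely. -/
theorem stmt19 (a0 d : ℝ) (ha0 : 0 < a0) (hd : 0 < d) (Ω : Set Pt)
    (hΩ : IsAddFundamentalDomain (lat a0) Ω volume)
    (f g : Pt → ℝ → ℂ) (fc gc : ℤ × ℤ → ℝ → ℂ)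
    (hfper : LPeriodic a0 f) (hgper : LPeriodic a0 g)
    (hfc2 : ∀ m, MemLp (fc m) 2 (volume : Measure ℝ))
    (hgc2 : ∀ m, MemLp (gc m) 2 (volume : Measure ℝ))
    (hfcs : Summable (fun m : ℤ × ℤ => (eLpNorm (fc m) 2 volume).toReal))
    (hgcs : Summable (fun m : ℤ × ℤ => (eLpNorm (gc m) 2 volume).toReal))
    (hfexp : ∀ (x : Pt) (z : ℝ), HasSum
      (fun m : ℤ × ℤ => fc m z * Complex.exp (Complex.I * (dot (dualVec a0 m) x : ℂ)))
      (f x z))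
    (hgexp : ∀ (x : Pt) (z : ℝ), HasSum
      (fun m : ℤ × ℤ => gc m z * Complex.exp (Complex.I * (dot (dualVec a0 m) x : ℂ)))
      (g x z)) :
    ∀ X : Pt,
      Summable (fun m : ℤ × ℤ =>
        ‖(((volume Ω).toReal : ℝ) : ℂ) *
            (∫ z : ℝ, (starRingEnd ℂ) (fc m (z - d / 2)) * gc m (z + d / 2)) *
            Complex.exp (Complex.I * (dot (dualVec a0 m) (Jmat X) : ℂ))‖) ∧
      HasSum (fun m : ℤ × ℤ =>
          (((volume Ω).toReal : ℝ) : ℂ) *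
            (∫ z : ℝ, (starRingEnd ℂ) (fc m (z - d / 2)) * gc m (z + d / 2)) *
            Complex.exp (Complex.I * (dot (dualVec a0 m) (Jmat X) : ℂ)))
        (bra d Ω 1 (-1) f g X) := by

  intro X
  set u : Pt := ((1:ℝ) / 2) • Jmat X with hu
  set Fc : ℤ × ℤ → ℝ → ℂ := fun m z =>
    Complex.exp (Complex.I * (dot (dualVec a0 m) (-u) : ℂ)) * fc m (z - d / 2) with hFc
  set Gc : ℤ × ℤ → ℝ → ℂ := fun m z =>
    Complex.exp (Complex.I * (dot (dualVec a0 m) u : ℂ)) * gc m (z + d / 2) with hGc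
  set Fb : Pt → ℝ → ℂ := fun x z => f (x - u) (z - d / 2) with hFb
  set Gb : Pt → ℝ → ℂ := fun x z => g (x + u) (z + d / 2) with hGb
  have hmpF : MeasurePreserving (fun z : ℝ => z - d / 2) volume volume := by
    simpa [sub_eq_add_neg] using measurePreserving_add_right (volume : Measure ℝ) (-(d / 2))
  have hmpG : MeasurePreserving (fun z : ℝ => z + d / 2) volume volume :=
    measurePreserving_add_right (volume : Measure ℝ) (d / 2)
  have hFc2 : ∀ m, MemLp (Fc m) 2 (volume : Measure ℝ) := fun m =>
    ((hfc2 m).comp_measurePreserving hmpF).const_mul _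
  have hGc2 : ∀ m, MemLp (Gc m) 2 (volume : Measure ℝ) := fun m =>
    ((hgc2 m).comp_measurePreserving hmpG).const_mul _
  have hFcnorm : ∀ m, eLpNorm (Fc m) 2 (volume : Measure ℝ) = eLpNorm (fc m) 2 volume := by
    intro m
    have h1 : Fc m = (Complex.exp (Complex.I * (dot (dualVec a0 m) (-u) : ℂ)))
        • (fun z => fc m (z - d / 2)) := rfl
    rw [h1, eLpNorm_const_smul, enorm_eq_nnnorm, Stmt19Aux.nnnorm_eph, ENNReal.coe_one, one_mul]
    exact eLpNorm_comp_measurePreserving (hfc2 m).1 hmpF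
  have hGcnorm : ∀ m, eLpNorm (Gc m) 2 (volume : Measure ℝ) = eLpNorm (gc m) 2 volume := by
    intro m
    have h1 : Gc m = (Complex.exp (Complex.I * (dot (dualVec a0 m) u : ℂ)))
        • (fun z => gc m (z + d / 2)) := rfl
    rw [h1, eLpNorm_const_smul, enorm_eq_nnnorm, Stmt19Aux.nnnorm_eph, ENNReal.coe_one, one_mul]
    exact eLpNorm_comp_measurePreserving (hgc2 m).1 hmpG
  have hFcs : Summable (fun m : ℤ × ℤ => (eLpNorm (Fc m) 2 volume).toReal) := by
    simp only [hFcnorm]; exact hfcs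
  have hGcs : Summable (fun m : ℤ × ℤ => (eLpNorm (Gc m) 2 volume).toReal) := by
    simp only [hGcnorm]; exact hgcs
  have hFexp : ∀ (x : Pt) (z : ℝ), HasSum
      (fun m : ℤ × ℤ => Fc m z * Complex.exp (Complex.I * (dot (dualVec a0 m) x : ℂ)))
      (Fb x z) := by
    intro x z
    have h0 := hfexp (x - u) (z - d / 2)
    have he : (fun m : ℤ × ℤ => Fc m z * Complex.exp (Complex.I * (dot (dualVec a0 m) x : ℂ)))
        = fun m : ℤ × ℤ => fc m (z - d / 2) *
            Complex.exp (Complex.I * (dot (dualVec a0 m) (x - u) : ℂ)) := by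
      funext m
      rw [hFc]
      have hd : dot (dualVec a0 m) (x - u)
          = dot (dualVec a0 m) (-u) + dot (dualVec a0 m) x := by
        simp [dot]; ring
      rw [hd]
      push_cast
      rw [mul_add, Complex.exp_add]
      ring
    rw [he]
    exact h0
  have hGexp : ∀ (x : Pt) (z : ℝ), HasSum
      (fun m : ℤ × ℤ => Gc m z * Complex.exp (Complex.I * (dot (dualVec a0 m) x : ℂ)))
      (Gb x z) := by
    intro x z
    have h0 := hgexp (x + u) (z + d / 2)
    have he : (fun m : ℤ × ℤ => Gc m z * Complex.exp (Complex.I * (dot (dualVec a0 m) x : ℂ)))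
        = fun m : ℤ × ℤ => gc m (z + d / 2) *
            Complex.exp (Complex.I * (dot (dualVec a0 m) (x + u) : ℂ)) := by
      funext m
      rw [hGc]
      have hd : dot (dualVec a0 m) (x + u)
          = dot (dualVec a0 m) u + dot (dualVec a0 m) x := by
        simp [dot]; ring
      rw [hd]
      push_cast
      rw [mul_add, Complex.exp_add]
      ring
    rw [he]
    exact h0
  have hcore := Stmt19Aux.core ha0 hΩ Fb Gb Fc Gc hFc2 hGc2 hFcs hGcs hFexp hGexp
  have hterm : ∀ m : ℤ × ℤ,
      ((((volume Ω).toReal : ℝ) : ℂ) * ∫ z : ℝ, (starRingEnd ℂ) (Fc m z) * Gc m z)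
      = (((volume Ω).toReal : ℝ) : ℂ) *
          (∫ z : ℝ, (starRingEnd ℂ) (fc m (z - d / 2)) * gc m (z + d / 2)) *
          Complex.exp (Complex.I * (dot (dualVec a0 m) (Jmat X) : ℂ)) := by
    intro m
    have hKint : ∫ z : ℝ, (starRingEnd ℂ) (Fc m z) * Gc m z
        = (∫ z : ℝ, (starRingEnd ℂ) (fc m (z - d / 2)) * gc m (z + d / 2)) *
          Complex.exp (Complex.I * (dot (dualVec a0 m) (Jmat X) : ℂ)) := by
      rw [← integral_mul_const]
      congr 1
      funext z
      rw [hFc, hGc]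
      simp only
      rw [map_mul]
      have hconj : (starRingEnd ℂ) (Complex.exp (Complex.I * (dot (dualVec a0 m) (-u) : ℂ)))
          = Complex.exp (Complex.I * (dot (dualVec a0 m) u : ℂ)) := by
        rw [← Complex.exp_conj, map_mul, Complex.conj_I, Complex.conj_ofReal]
        have hneg : dot (dualVec a0 m) (-u) = -dot (dualVec a0 m) u := by
          simp [dot]; ring
        rw [hneg]
        push_cast
        ring_nf
      rw [hconj]
      have h2t : (Complex.I * (dot (dualVec a0 m) (Jmat X) : ℂ))
          = Complex.I * (dot (dualVec a0 m) u : ℂ) +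
            Complex.I * (dot (dualVec a0 m) u : ℂ) := by
        have hd : dot (dualVec a0 m) (Jmat X)
            = dot (dualVec a0 m) u + dot (dualVec a0 m) u := by
          rw [hu, Stmt19Aux.dot_smul_right]; ring
        rw [hd]; push_cast; ring
      rw [h2t, Complex.exp_add]
      ring
    rw [hKint, mul_assoc]
  refine ⟨?_, ?_⟩
  · have h1 := hcore.1
    simp only [hterm] at h1
    exact h1
  · have h2 := hcore.2
    simp only [hterm] at h2
    have hbra : (∫ p in Ω ×ˢ (Set.univ : Set ℝ), (starRingEnd ℂ) (Fb p.1 p.2) * Gb p.1 p.2)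
        = bra d Ω 1 (-1) f g X := by
      rw [bra]
      congr 1
      funext p
      rw [braFn, hFb, hGb]
      simp only
      have e1 : p.1 - ((1:ℝ) / 2) • Jmat X = p.1 - u := by rw [hu]
      have e2 : p.2 - d / 2 = p.2 - 1 * d / 2 := by ring
      have e3 : p.1 + u = p.1 - ((-1:ℝ) / 2) • Jmat X := by
        rw [hu, show ((-1:ℝ) / 2) = -((1:ℝ)/2) by norm_num, neg_smul, sub_neg_eq_add]
      have e4 : p.2 + d / 2 = p.2 - (-1) * d / 2 := by ring
      rw [e1, ← e2, ← e3, ← e4]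
    rw [hbra] at h2
    exact h2
end
end
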